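/- arXiv:1609.08788 — 2 statements merged into one kernel-verified Lean document; each statement's English description precedes it below -/
import Mathlib

section
/- Let ℘ be a prime of degree h ≥ 1 in A. Let ᾱ, β̄ ∈ S_h^ω and let u, v be integers with 0 ≤ u ≤ z_ᾱ(h) and 0 ≤ v ≤ z_β̄(h). Then binom(z_{ᾱ⋆β̄}(h), u + q^{h·deg(ᾱ)} v)_C ≡ binom(z_ᾱ(h), u)_C · binom(z_β̄(h), v)_C (mod ℘). -/
open Polynomial

/-- `D_i = ∏_{r=0}^{i-1} (T^{q^i} - T^{q^r})`, with `D_0 = 1`. -/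
noncomputable def carlitzD (Fq : Type*) [Field Fq] (q i : ℕ) : Polynomial Fq :=
  ∏ r ∈ Finset.range i, (X ^ q ^ i - X ^ q ^ r)

/-- The Carlitz factorial `n!_C = ∏_i D_i^{n_i}`, where `n = Σ n_i q^i` is the
`q`-adic expansion of `n` (the digit `n_i` is `n / q ^ i % q`). -/
noncomputable def carlitzFactorial (Fq : Type*) [Field Fq] (q n : ℕ) : Polynomial Fq :=
  ∏ i ∈ Finset.range (n + 1), carlitzD Fq q i ^ (n / q ^ i % q)

/-- The Carlitz binomial coefficient `binom(n,m)_C = n!_C / (m!_C (n-m)!_C)` for `m ≤ n`,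
and `0` otherwise. -/
noncomputable def carlitzBinom (Fq : Type*) [Field Fq] (q n m : ℕ) : Polynomial Fq :=
  if m ≤ n then
    carlitzFactorial Fq q n / (carlitzFactorial Fq q m * carlitzFactorial Fq q (n - m))
  else 0

section Aux

variable {Fq : Type*} [Field Fq] {p : ℕ} [Fact p.Prime] [CharP Fq p] (s : ℕ)

/-- Frobenius twisting of the bracket polynomial. -/
lemma frob_pow (j r : ℕ) :
    ((X : Polynomial Fq) ^ (p ^ s) ^ j - X) ^ (p ^ s) ^ r
      = X ^ (p ^ s) ^ (j + r) - X ^ (p ^ s) ^ r := by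
  have h1 : ∀ k : ℕ, ((p:ℕ) ^ s) ^ k = p ^ (s * k) := fun k => by rw [← pow_mul]
  rw [h1 r, sub_pow_char_pow, ← pow_mul, h1 j, ← pow_add, ← Nat.mul_add, ← h1 (j + r)]

/-- Digit sum identity. -/
lemma digit_sum {q : ℕ} (hq : 2 ≤ q) (n : ℕ) :
    ∀ d j, n < q ^ (j + d) →
      ∑ i ∈ Finset.Ico j (j + d), (n / q ^ i % q) * q ^ (i - j) = n / q ^ j := by
  intro d
  induction d with
  | zero =>
    intro j hj
    rw [Nat.add_zero] at hj
    simp [Nat.div_eq_of_lt hj]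
  | succ d ih =>
    intro j hj
    rw [Finset.sum_eq_sum_Ico_succ_bot (by omega)]
    have h2 : ∑ i ∈ Finset.Ico (j + 1) (j + (d + 1)), (n / q ^ i % q) * q ^ (i - j)
        = ∑ i ∈ Finset.Ico (j + 1) (j + 1 + d), ((n / q ^ i % q) * q ^ (i - (j + 1))) * q := by
      rw [show j + (d+1) = j + 1 + d by omega]
      refine Finset.sum_congr rfl fun i hi => ?_
      simp only [Finset.mem_Ico] at hi
      rw [mul_assoc, ← pow_succ]
      congr 2
      omega
    rw [h2, ← Finset.sum_mul, ih (j+1) (by rw [show j+1+d = j + (d+1) by omega]; exact hj)]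
    have h3 : n / q ^ (j+1) = n / q ^ j / q := by
      rw [pow_succ, ← Nat.div_div_eq_div_mul]
    rw [h3]
    simp only [Nat.sub_self, pow_zero, mul_one]
    exact Nat.mod_add_div' _ _

lemma factorial_eq_aux (n : ℕ) (hs : 0 < s) :
    carlitzFactorial Fq (p ^ s) n
      = ∏ j ∈ Finset.range (n + 1),
          ((X : Polynomial Fq) ^ (p ^ s) ^ (j + 1) - X) ^ (n / (p ^ s) ^ (j + 1)) := by
  set q := p ^ s with hqdef
  have hq : 2 ≤ q := le_trans (Fact.out : p.Prime).two_le (Nat.le_self_pow hs.ne' p)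
  have step1 : carlitzFactorial Fq q n
      = ∏ i ∈ Finset.range (n + 1), ∏ r ∈ Finset.range i,
          ((X : Polynomial Fq) ^ q ^ (r + 1) - X) ^ (q ^ (i - 1 - r) * (n / q ^ i % q)) := by
    unfold carlitzFactorial carlitzD
    refine Finset.prod_congr rfl fun i _ => ?_
    rw [← Finset.prod_pow]
    rw [← Finset.prod_range_reflect
      (fun r => ((X : Polynomial Fq) ^ q ^ (r + 1) - X) ^ (q ^ (i - 1 - r) * (n / q ^ i % q)))]
    refine Finset.prod_congr rfl fun r hr => ?_
    simp only [Finset.mem_range] at hr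
    have h1 : i - 1 - (i - 1 - r) = r := by omega
    rw [h1]
    have h2 : ((X : Polynomial Fq) ^ q ^ i - X ^ q ^ r) = (X ^ q ^ (i - r) - X) ^ q ^ r := by
      rw [frob_pow s (i - r) r, Nat.sub_add_cancel hr.le]
    have h3 : i - 1 - r + 1 = i - r := by omega
    rw [h3, h2, ← pow_mul, mul_comm (q ^ r)]
  rw [step1]
  have step2 : ∀ (F : ℕ → ℕ → Polynomial Fq),
      ∏ i ∈ Finset.range (n + 1), ∏ r ∈ Finset.range i, F i r
        = ∏ r ∈ Finset.range (n + 1), ∏ i ∈ Finset.Ico (r + 1) (n + 1), F i r := by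
    intro F
    refine Finset.prod_comm' fun i r => ?_
    simp only [Finset.mem_range, Finset.mem_Ico]
    omega
  rw [step2]
  refine Finset.prod_congr rfl fun r hr => ?_
  rw [Finset.prod_pow_eq_pow_sum]
  congr 1
  have h4 : ∑ i ∈ Finset.Ico (r + 1) (n + 1), q ^ (i - 1 - r) * (n / q ^ i % q)
      = ∑ i ∈ Finset.Ico (r + 1) (r + 1 + (n - r)), (n / q ^ i % q) * q ^ (i - (r + 1)) := by
    rw [show r + 1 + (n - r) = n + 1 by simp only [Finset.mem_range] at hr; omega]
    refine Finset.sum_congr rfl fun i hi => ?_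
    rw [mul_comm]
    congr 2
    omega
  rw [h4, digit_sum hq n (n - r) (r + 1)]
  calc n < q ^ n := Nat.lt_of_lt_of_le (Nat.lt_two_pow_self (n := n)) (Nat.pow_le_pow_left hq n)
    _ ≤ q ^ (r + 1 + (n - r)) := Nat.pow_le_pow_right (by omega) (by omega)

lemma bracket_ne_zero {q : ℕ} (hq : 2 ≤ q) (j : ℕ) :
    ((X : Polynomial Fq) ^ q ^ (j + 1) - X) ≠ 0 := by
  intro hcon
  have h1 : (X : Polynomial Fq) ^ q ^ (j + 1) = X ^ 1 := by
    rw [pow_one]; exact sub_eq_zero.mp hcon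
  have := congrArg natDegree h1
  rw [natDegree_X_pow, natDegree_X_pow] at this
  have : 2 ≤ q ^ (j + 1) := le_trans hq (Nat.le_self_pow (by omega) q)
  omega

lemma prod_stable {q : ℕ} (hq : 2 ≤ q) (n N M : ℕ) (hNM : N ≤ M) (hN : n < q ^ (N + 1)) :
    ∏ j ∈ Finset.range M, ((X : Polynomial Fq) ^ q ^ (j + 1) - X) ^ (n / q ^ (j + 1))
      = ∏ j ∈ Finset.range N, ((X : Polynomial Fq) ^ q ^ (j + 1) - X) ^ (n / q ^ (j + 1)) := by
  symm
  refine Finset.prod_subset (Finset.range_subset_range.mpr hNM) fun j hj hj' => ?_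
  simp only [Finset.mem_range] at hj hj'
  have : n < q ^ (j + 1) :=
    lt_of_lt_of_le hN (Nat.pow_le_pow_right (by omega) (by omega))
  rw [Nat.div_eq_of_lt this, pow_zero]

lemma factorial_eq (hs : 0 < s) (n N : ℕ) (hN : n < (p ^ s) ^ (N + 1)) :
    carlitzFactorial Fq (p ^ s) n
      = ∏ j ∈ Finset.range N,
          ((X : Polynomial Fq) ^ (p ^ s) ^ (j + 1) - X) ^ (n / (p ^ s) ^ (j + 1)) := by
  set q := p ^ s with hqdef
  have hq : 2 ≤ q := le_trans (Fact.out : p.Prime).two_le (Nat.le_self_pow hs.ne' p)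
  rw [factorial_eq_aux s n hs]
  have hn : n < q ^ (n + 1 + 1) :=
    lt_of_lt_of_le (Nat.lt_two_pow_self (n := n)) (le_trans (Nat.pow_le_pow_left hq n)
      (Nat.pow_le_pow_right (by omega) (by omega)))
  rw [← prod_stable hq n (n+1) (max N (n+1)) (le_max_right _ _) hn,
      prod_stable hq n N (max N (n+1)) (le_max_left _ _) hN]

lemma factorial_ne_zero (hs : 0 < s) (n : ℕ) : carlitzFactorial Fq (p ^ s) n ≠ 0 := by
  have hq : 2 ≤ p ^ s := le_trans (Fact.out : p.Prime).two_le (Nat.le_self_pow hs.ne' p)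
  rw [factorial_eq_aux s n hs]
  exact Finset.prod_ne_zero_iff.mpr fun j _ => pow_ne_zero _ (bracket_ne_zero hq j)

lemma binom_eq (hs : 0 < s) (n m N : ℕ) (hm : m ≤ n) (hN : n < (p ^ s) ^ (N + 1)) :
    carlitzBinom Fq (p ^ s) n m
      = ∏ j ∈ Finset.range N,
          ((X : Polynomial Fq) ^ (p ^ s) ^ (j + 1) - X) ^
            (if (p ^ s) ^ (j + 1) ≤ m % (p ^ s) ^ (j + 1) + (n - m) % (p ^ s) ^ (j + 1)
              then 1 else 0) := by
  set q := p ^ s with hqdef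
  have hq : 2 ≤ q := le_trans (Fact.out : p.Prime).two_le (Nat.le_self_pow hs.ne' p)
  have hmN : m < q ^ (N + 1) := lt_of_le_of_lt hm hN
  have hnmN : n - m < q ^ (N + 1) := lt_of_le_of_lt (Nat.sub_le n m) hN
  have key : carlitzFactorial Fq q n
      = (carlitzFactorial Fq q m * carlitzFactorial Fq q (n - m)) *
        ∏ j ∈ Finset.range N,
          ((X : Polynomial Fq) ^ q ^ (j + 1) - X) ^
            (if q ^ (j + 1) ≤ m % q ^ (j + 1) + (n - m) % q ^ (j + 1) then 1 else 0) := by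
    rw [factorial_eq s hs n N hN, factorial_eq s hs m N hmN,
        factorial_eq s hs (n - m) N hnmN, ← Finset.prod_mul_distrib, ← Finset.prod_mul_distrib]
    refine Finset.prod_congr rfl fun j _ => ?_
    rw [← pow_add, ← pow_add]
    congr 1
    have hpos : 0 < q ^ (j + 1) := Nat.pow_pos (by omega)
    conv_lhs => rw [← Nat.add_sub_cancel' hm]
    rw [Nat.add_div hpos]
  unfold carlitzBinom
  rw [if_pos hm, key, mul_div_cancel_left₀ _
    (mul_ne_zero (factorial_ne_zero s hs m) (factorial_ne_zero s hs (n - m)))]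

/-- Carry condition shift. -/
lemma carry_shift {Q P z S : ℕ} (hQ : 0 < Q) (hz : z < Q) :
    (Q * P ≤ z + Q * S) ↔ (P ≤ S) := by
  constructor
  · intro hle
    by_contra hc
    push_neg at hc
    have : z + Q * S < Q * (S + 1) := by
      rw [Nat.mul_add, Nat.mul_one]; omega
    have : z + Q * S < Q * P := lt_of_lt_of_le this (Nat.mul_le_mul_left Q (by omega))
    omega
  · intro hle
    calc Q * P ≤ Q * S := Nat.mul_le_mul_left Q hle
      _ ≤ z + Q * S := Nat.le_add_left _ _

end Aux

/-- Corollary 1: for a prime `℘` of degree `h ≥ 1` in `A`, words `ᾱ, β̄ ∈ S_h^ω`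
(nonempty lists of digits `< q^h`, with `z_ᾱ(h) = Nat.ofDigits (q^h) ᾱ`,
`deg ᾱ = ᾱ.length`, concatenation being list append), and integers
`0 ≤ u ≤ z_ᾱ(h)`, `0 ≤ v ≤ z_β̄(h)`:
`binom(z_{ᾱ⋆β̄}(h), u + q^{h·deg ᾱ} v)_C ≡ binom(z_ᾱ(h), u)_C · binom(z_β̄(h), v)_C (mod ℘)`. -/
theorem carlitzBinom_concat_mul_congr (Fq : Type*) [Field Fq] [Fintype Fq]
    (p s : ℕ) (hp : p.Prime) (hs : 0 < s) (hcard : Fintype.card Fq = p ^ s)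
    (h : ℕ) (hh : 1 ≤ h) (℘ : Polynomial Fq) (hirr : Irreducible ℘) (hdeg : ℘.natDegree = h)
    (a b : List ℕ) (ha : a ≠ []) (ha' : ∀ x ∈ a, x < (p ^ s) ^ h)
    (hb : b ≠ []) (hb' : ∀ x ∈ b, x < (p ^ s) ^ h)
    (u v : ℕ) (hu : u ≤ Nat.ofDigits ((p ^ s) ^ h) a) (hv : v ≤ Nat.ofDigits ((p ^ s) ^ h) b) :
    ℘ ∣ (carlitzBinom Fq (p ^ s) (Nat.ofDigits ((p ^ s) ^ h) (a ++ b))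
          (u + ((p ^ s) ^ h) ^ a.length * v) -
      carlitzBinom Fq (p ^ s) (Nat.ofDigits ((p ^ s) ^ h) a) u *
        carlitzBinom Fq (p ^ s) (Nat.ofDigits ((p ^ s) ^ h) b) v) := by
  haveI : Fact p.Prime := ⟨hp⟩
  haveI hchar : CharP Fq p := by
    have h1 := ringChar.charP Fq
    obtain ⟨m, hrprime, hcardr⟩ := FiniteField.card Fq (ringChar Fq)
    have hdvd : p ∣ ringChar Fq ^ (m : ℕ) := by
      rw [← hcardr, hcard]; exact dvd_pow_self p hs.ne'
    have hpr : p = ringChar Fq :=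
      (Nat.prime_dvd_prime_iff_eq hp hrprime).mp (hp.dvd_of_dvd_pow hdvd)
    rwa [hpr]
  set q : ℕ := p ^ s with hqdef
  have hq : 2 ≤ q := le_trans hp.two_le (Nat.le_self_pow hs.ne' p)
  have hqh : 1 < q ^ h := Nat.one_lt_pow (by omega) (by omega)
  set Q : ℕ := (q ^ h) ^ a.length with hQdef
  have hQ : Q = q ^ (h * a.length) := by rw [hQdef, ← pow_mul]
  set za : ℕ := Nat.ofDigits (q ^ h) a with hzadef
  set zb : ℕ := Nat.ofDigits (q ^ h) b with hzbdef
  set N1 : ℕ := h * a.length with hN1def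
  set N2 : ℕ := h * b.length with hN2def
  have hza : za < q ^ N1 := by
    rw [hN1def, pow_mul]; exact Nat.ofDigits_lt_base_pow_length hqh ha'
  have hzb : zb < q ^ N2 := by
    rw [hN2def, pow_mul]; exact Nat.ofDigits_lt_base_pow_length hqh hb'
  have hzaQ : za < Q := by rw [hQ]; exact hza
  have hQpos : 0 < Q := by positivity
  have happ : Nat.ofDigits (q ^ h) (a ++ b) = za + Q * zb := by
    rw [Nat.ofDigits_append]
  have hm : u + Q * v ≤ za + Q * zb :=
    Nat.add_le_add hu (Nat.mul_le_mul_left Q hv)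
  have hsub : (za + Q * zb) - (u + Q * v) = (za - u) + Q * (zb - v) := by
    have h1 : Q * (zb - v) + Q * v = Q * zb := by
      rw [← Nat.mul_add, Nat.sub_add_cancel hv]
    rw [Nat.sub_eq_iff_eq_add hm, add_add_add_comm, Nat.sub_add_cancel hu, h1]
  have hn : za + Q * zb < q ^ (N1 + N2) := by
    have h5 : za + Q * zb < Q * (zb + 1) := by
      rw [Nat.mul_add, Nat.mul_one, Nat.add_comm (Q * zb) Q]
      exact Nat.add_lt_add_right hzaQ (Q * zb)
    calc za + Q * zb < Q * (zb + 1) := h5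
      _ ≤ Q * q ^ N2 := Nat.mul_le_mul_left Q hzb
      _ = q ^ (N1 + N2) := by rw [hQ, ← pow_add]
  have hnN : za + Q * zb < q ^ (N1 + N2 + 1) :=
    lt_of_lt_of_le hn (Nat.pow_le_pow_right (by omega) (by omega))
  -- the three binomial formulas
  have hB := binom_eq (Fq := Fq) s hs (za + Q * zb) (u + Q * v) (N1 + N2) hm hnN
  have hBa := binom_eq (Fq := Fq) s hs za u N1 hu
    (lt_of_lt_of_le hza (Nat.pow_le_pow_right (by omega) (by omega)))
  have hBb := binom_eq (Fq := Fq) s hs zb v N2 hv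
    (lt_of_lt_of_le hzb (Nat.pow_le_pow_right (by omega) (by omega)))
  -- mod computations for carries
  have key1 : ∀ (x y j : ℕ), j < N1 → (x + Q * y) % q ^ (j + 1) = x % q ^ (j + 1) := by
    intro x y j hj
    have hsplit : Q = q ^ (j + 1) * q ^ (N1 - (j + 1)) := by
      rw [hQ, ← pow_add]; try (congr 1 <;> omega)
    rw [hsplit, mul_assoc]
    exact Nat.add_mul_mod_self_left x _ _
  have key2 : ∀ (x y j : ℕ), x < Q →
      (x + Q * y) % q ^ (N1 + j + 1) = x + Q * (y % q ^ (j + 1)) := by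
    intro x y j hx
    have hppos : 0 < q ^ (j + 1) := by positivity
    have hsplit : q ^ (N1 + j + 1) = Q * q ^ (j + 1) := by
      rw [hQ, ← pow_add]; try (congr 1 <;> omega)
    have hdecomp : x + Q * y
        = (x + Q * (y % q ^ (j + 1))) + (Q * q ^ (j + 1)) * (y / q ^ (j + 1)) := by
      conv_lhs => rw [← Nat.mod_add_div y (q ^ (j + 1))]
      ring
    rw [hsplit, hdecomp, Nat.add_mul_mod_self_left]
    refine Nat.mod_eq_of_lt ?_
    calc x + Q * (y % q ^ (j + 1)) < Q + Q * (y % q ^ (j + 1)) :=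
          Nat.add_lt_add_right hx _
      _ = Q * (y % q ^ (j + 1) + 1) := by ring
      _ ≤ Q * q ^ (j + 1) := Nat.mul_le_mul_left Q (Nat.mod_lt y hppos)
  -- reduce to the quotient ring
  rw [← Ideal.mem_span_singleton (y := ℘), ← Ideal.Quotient.eq]
  set φ := Ideal.Quotient.mk (Ideal.span {℘}) with hφdef
  rw [happ, hB, hBa, hBb, Finset.prod_range_add, map_mul, map_mul]
  -- first factor
  have hfirst : ∀ j ∈ Finset.range N1,
      ((X : Polynomial Fq) ^ q ^ (j + 1) - X) ^
        (if q ^ (j + 1) ≤ (u + Q * v) % q ^ (j + 1) +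
            ((za + Q * zb) - (u + Q * v)) % q ^ (j + 1) then 1 else 0)
      = ((X : Polynomial Fq) ^ q ^ (j + 1) - X) ^
        (if q ^ (j + 1) ≤ u % q ^ (j + 1) + (za - u) % q ^ (j + 1) then 1 else 0) := by
    intro j hj
    simp only [Finset.mem_range] at hj
    rw [hsub, key1 u v j hj, key1 (za - u) (zb - v) j hj]
  rw [Finset.prod_congr rfl hfirst]
  congr 1
  -- second factor: carries match those of (v, zb - v)
  have hsecond : ∀ j ∈ Finset.range N2,
      ((X : Polynomial Fq) ^ q ^ (N1 + j + 1) - X) ^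
        (if q ^ (N1 + j + 1) ≤ (u + Q * v) % q ^ (N1 + j + 1) +
            ((za + Q * zb) - (u + Q * v)) % q ^ (N1 + j + 1) then 1 else 0)
      = ((X : Polynomial Fq) ^ q ^ (N1 + j + 1) - X) ^
        (if q ^ (j + 1) ≤ v % q ^ (j + 1) + (zb - v) % q ^ (j + 1) then 1 else 0) := by
    intro j hj
    rw [hsub, key2 u v j (lt_of_le_of_lt hu hzaQ),
        key2 (za - u) (zb - v) j (lt_of_le_of_lt (Nat.sub_le za u) hzaQ)]
    congr 1
    have hsplit : q ^ (N1 + j + 1) = Q * q ^ (j + 1) := by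
      rw [hQ, ← pow_add]; try (congr 1 <;> omega)
    have hcomb : (u + Q * (v % q ^ (j + 1))) + ((za - u) + Q * ((zb - v) % q ^ (j + 1)))
        = za + Q * (v % q ^ (j + 1) + (zb - v) % q ^ (j + 1)) := by
      rw [add_add_add_comm, Nat.add_sub_cancel' hu, ← Nat.mul_add]
    rw [hsplit, hcomb]
    exact if_congr (carry_shift hQpos hzaQ) rfl rfl
  rw [Finset.prod_congr rfl hsecond]
  -- divisibility: ℘ ∣ X^(q^(h*M)) - X
  have hdvd0 : ℘ ∣ ((X : Polynomial Fq) ^ q ^ h - X) := by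
    haveI : Fact (Irreducible ℘) := ⟨hirr⟩
    have hfin : Module.Finite Fq (AdjoinRoot ℘) :=
      PowerBasis.finite (AdjoinRoot.powerBasis hirr.ne_zero)
    haveI : Finite (AdjoinRoot ℘) := Module.finite_of_finite Fq
    haveI : Fintype (AdjoinRoot ℘) := Fintype.ofFinite _
    have hcardK : Fintype.card (AdjoinRoot ℘) = q ^ h := by
      rw [Module.card_eq_pow_finrank (K := Fq) (V := AdjoinRoot ℘),
        (AdjoinRoot.powerBasis hirr.ne_zero).finrank, AdjoinRoot.powerBasis_dim,
        hcard, hdeg, hqdef]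
    rw [← AdjoinRoot.mk_eq_zero (f := ℘)]
    have hroot := FiniteField.pow_card (AdjoinRoot.root ℘)
    rw [hcardK] at hroot
    simp [hroot]
  have hdvdM : ∀ M : ℕ, ℘ ∣ ((X : Polynomial Fq) ^ q ^ (h * M) - X) := by
    intro M
    induction M with
    | zero => simp
    | succ M ih =>
      have heq : (X : Polynomial Fq) ^ q ^ (h * (M + 1)) - X
          = ((X : Polynomial Fq) ^ q ^ (h * M) - X) ^ q ^ h + (X ^ q ^ h - X) := by
        rw [hqdef, frob_pow s (h * M) h, show h * M + h = h * (M + 1) by ring]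
        ring
      rw [heq]
      exact dvd_add (dvd_pow ih (by positivity)) hdvd0
  have hφbr : ∀ k : ℕ, φ ((X : Polynomial Fq) ^ q ^ (N1 + k) - X)
      = φ ((X : Polynomial Fq) ^ q ^ k - X) := by
    intro k
    rw [hφdef, Ideal.Quotient.eq, Ideal.mem_span_singleton]
    have heq : ((X : Polynomial Fq) ^ q ^ (N1 + k) - X) - ((X : Polynomial Fq) ^ q ^ k - X)
        = ((X : Polynomial Fq) ^ q ^ N1 - X) ^ q ^ k := by
      rw [hqdef, frob_pow s N1 k]
      ring
    rw [heq]
    exact dvd_pow (by rw [hN1def]; exact hdvdM a.length) (by positivity)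
  rw [map_prod, map_prod]
  refine Finset.prod_congr rfl fun j _ => ?_
  rw [map_pow, map_pow]
  congr 1
  have := hφbr (j + 1)
  rwa [show N1 + (j + 1) = N1 + j + 1 by omega] at this
end

section
/- Let ℘ be a prime of degree h ≥ 1 in A and 𝔮 a primitive root modulo ℘. Let m ∈ ℤ and ᾱ, β̄ ∈ S_h^ω. Then the map Ψ(u, v) = u + q^{h·deg(ᾱ)} v is a bijection from the union ⋃_{j=0}^{q^h−2} S_j(ᾱ) × S_{m−j}(β̄) onto S_m(ᾱ⋆β̄). -/
open Polynomial

/-- `S_j` for the value `z = z_ᾱ(h)`: the set of integers `0 ≤ u ≤ z` with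
`binom(z, u)_C ≡ 𝔮^j (mod ℘)`, where `𝔮` is (the class of) a primitive root modulo `℘`,
viewed as a unit of `A/℘A`. -/
noncomputable def carlitzResidueSet (Fq : Type*) [Field Fq] (q : ℕ) (℘ : Polynomial Fq)
    (𝔮 : (Polynomial Fq ⧸ Ideal.span {℘})ˣ) (z : ℕ) (j : ℤ) : Set ℕ :=
  {u : ℕ | u ≤ z ∧
    Ideal.Quotient.mk (Ideal.span {℘}) (carlitzBinom Fq q z u) = ↑(𝔮 ^ j)}

namespace CarlitzAux

/-! ### Carries in base-`q` addition -/

/-- carry into position `i` when adding `m` and `k` in base `q`. -/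
def cy (q m k i : ℕ) : ℕ := (m % q ^ i + k % q ^ i) / q ^ i

lemma cy_zero (q m k : ℕ) : cy q m k 0 = 0 := by simp [cy, Nat.mod_one]

lemma cy_eq_zero {q m k i : ℕ} (h : m + k < q ^ i) : cy q m k i = 0 := by
  have h1 : m % q ^ i ≤ m := Nat.mod_le _ _
  have h2 : k % q ^ i ≤ k := Nat.mod_le _ _
  exact Nat.div_eq_of_lt (by omega)

lemma mod_mul_pow (m P Q : ℕ) (hP : 0 < P) (hQ : 0 < Q) :
    m % (P * Q) = P * (m / P % Q) + m % P := by
  have h3 : m % P < P := Nat.mod_lt _ hP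
  have h4 : m / P % Q < Q := Nat.mod_lt _ hQ
  have e1 : m % P + P * (m / P) = m := Nat.mod_add_div m P
  have e2 : m / P % Q + Q * (m / P / Q) = m / P := Nat.mod_add_div (m / P) Q
  have key : m = (P * Q) * (m / P / Q) + (P * (m / P % Q) + m % P) := by
    calc m = m % P + P * (m / P) := e1.symm
    _ = m % P + P * (m / P % Q + Q * (m / P / Q)) := by rw [e2]
    _ = (P * Q) * (m / P / Q) + (P * (m / P % Q) + m % P) := by ring
  have hlt : P * (m / P % Q) + m % P < P * Q := by
    have h5 : P * (m / P % Q) + P ≤ P * Q := by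
      have h6 : m / P % Q + 1 ≤ Q := h4
      calc P * (m / P % Q) + P = P * (m / P % Q + 1) := by ring
      _ ≤ P * Q := Nat.mul_le_mul_left _ h6
    omega
  conv_lhs => rw [key]
  rw [Nat.mul_add_mod, Nat.mod_eq_of_lt hlt]

lemma carry_core (P m k : ℕ) (hP : 0 < P) :
    (m + k) / P = m / P + k / P + (m % P + k % P) / P := by
  have key : m + k = P * (m / P + k / P) + (m % P + k % P) := by
    have h1 := Nat.mod_add_div m P
    have h2 := Nat.mod_add_div k P
    rw [Nat.mul_add]; omega
  rw [key, Nat.mul_add_div hP]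

/-- carry recursion: `c_{i+1} = (m_i + k_i + c_i) / q`. -/
lemma cy_succ (q m k i : ℕ) (hq : 0 < q) :
    cy q m k (i + 1) = (m / q ^ i % q + k / q ^ i % q + cy q m k i) / q := by
  have hP : 0 < q ^ i := Nat.pow_pos hq
  unfold cy
  rw [pow_succ]
  generalize q ^ i = P at *
  have hm := mod_mul_pow m P q hP hq
  have hk := mod_mul_pow k P q hP hq
  have hmP : m % P < P := Nat.mod_lt _ hP
  have hkP : k % P < P := Nat.mod_lt _ hP
  have hcy : m % P + k % P = P * ((m % P + k % P) / P) + (m % P + k % P) % P := by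
    have := Nat.mod_add_div (m % P + k % P) P
    omega
  have hrem : (m % P + k % P) % P < P := Nat.mod_lt _ hP
  rw [hm, hk]
  have key : P * (m / P % q) + m % P + (P * (k / P % q) + k % P)
      = P * (m / P % q + k / P % q + (m % P + k % P) / P) + (m % P + k % P) % P := by
    rw [Nat.mul_add, Nat.mul_add]; omega
  rw [key, ← Nat.div_div_eq_div_mul, Nat.mul_add_div hP, Nat.div_eq_of_lt hrem,
    Nat.add_zero]

/-- the digit identity `n_i + q * c_{i+1} = m_i + k_i + c_i` where `n = m + k`. -/
lemma digit_id (q m k i : ℕ) (hq : 0 < q) :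
    (m + k) / q ^ i % q + q * cy q m k (i + 1)
      = m / q ^ i % q + k / q ^ i % q + cy q m k i := by
  have hP : 0 < q ^ i := Nat.pow_pos hq
  have hdiv : (m + k) / q ^ i = m / q ^ i + k / q ^ i + cy q m k i :=
    carry_core (q ^ i) m k hP
  rw [cy_succ q m k i hq, hdiv]
  simp only [cy]
  generalize q ^ i = P at *
  generalize hc : (m % P + k % P) / P = c
  have hA : m / P + k / P + c
      = (m / P % q + k / P % q + c) + q * (m / P / q + k / P / q) := by
    have h1 := Nat.mod_add_div (m / P) q
    have h2 := Nat.mod_add_div (k / P) q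
    rw [Nat.mul_add]; omega
  rw [hA, Nat.add_mul_mod_self_left, Nat.mod_add_div]

lemma cy_shift_low {q N i : ℕ} (u u' v v' : ℕ) (hi : i ≤ N) :
    cy q (u + q ^ N * v) (u' + q ^ N * v') i = cy q u u' i := by
  obtain ⟨t, ht⟩ : q ^ i ∣ q ^ N := pow_dvd_pow q hi
  unfold cy
  rw [ht]
  rw [show u + q ^ i * t * v = u + q ^ i * (t * v) by ring,
    show u' + q ^ i * t * v' = u' + q ^ i * (t * v') by ring,
    Nat.add_mul_mod_self_left, Nat.add_mul_mod_self_left]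

lemma cy_shift_high {q N : ℕ} (hq : 0 < q) (u u' v v' i : ℕ)
    (hu : u < q ^ N) (hsum : u + u' < q ^ N) :
    cy q (u + q ^ N * v) (u' + q ^ N * v') (N + i) = cy q v v' i := by
  have hP : 0 < q ^ N := Nat.pow_pos hq
  have hQ : 0 < q ^ i := Nat.pow_pos hq
  unfold cy
  rw [pow_add]
  generalize hPd : q ^ N = P at *
  generalize hQd : q ^ i = Q at *
  have hmod : ∀ w z : ℕ, w < P → (w + P * z) % (P * Q) = w + P * (z % Q) := by
    intro w z hw
    have h1 : w + P * z = (P * Q) * (z / Q) + (w + P * (z % Q)) := by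
      conv_lhs => rw [← Nat.mod_add_div z Q]
      ring
    have h2 : w + P * (z % Q) < P * Q := by
      have h3 : z % Q < Q := Nat.mod_lt _ hQ
      have h4 : P * (z % Q) + P ≤ P * Q := by
        calc P * (z % Q) + P = P * (z % Q + 1) := by ring
        _ ≤ P * Q := Nat.mul_le_mul_left _ h3
      omega
    rw [h1, Nat.mul_add_mod, Nat.mod_eq_of_lt h2]
  rw [hmod u v hu, hmod u' v' (by omega)]
  have h5 : u + P * (v % Q) + (u' + P * (v' % Q))
      = P * (v % Q + v' % Q) + (u + u') := by ring
  rw [h5, ← Nat.div_div_eq_div_mul, Nat.mul_add_div hP, Nat.div_eq_of_lt hsum,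
    Nat.add_zero]

/-! ### The bracket polynomials and the product formula for Carlitz binomials -/

noncomputable def brk (Fq : Type*) [Field Fq] (q i : ℕ) : Polynomial Fq :=
  X ^ q ^ i - X

noncomputable def W (Fq : Type*) [Field Fq] (q m k : ℕ) : Polynomial Fq :=
  ∏ i ∈ Finset.range (m + k), brk Fq q (i + 1) ^ cy q m k (i + 1)

variable {Fq : Type*} [Field Fq]

lemma X_pow_sub_X_pow_ne_zero {a b : ℕ} (hba : b < a) :
    (X ^ a - X ^ b : Polynomial Fq) ≠ 0 := by
  intro hcon
  have h := congrArg (fun f => Polynomial.coeff f a) hcon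
  simp only [coeff_sub, coeff_X_pow, coeff_zero] at h
  rw [if_pos trivial, if_neg (by omega)] at h
  norm_num at h

lemma D_ne_zero {q : ℕ} (hq : 2 ≤ q) (i : ℕ) : carlitzD Fq q i ≠ 0 := by
  unfold carlitzD
  rw [Finset.prod_ne_zero_iff]
  intro r hr
  exact X_pow_sub_X_pow_ne_zero (Nat.pow_lt_pow_right (by omega) (Finset.mem_range.mp hr))

lemma fact_ne_zero {q : ℕ} (hq : 2 ≤ q) (n : ℕ) : carlitzFactorial Fq q n ≠ 0 := by
  unfold carlitzFactorial
  rw [Finset.prod_ne_zero_iff]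
  exact fun i _ => pow_ne_zero _ (D_ne_zero hq i)

lemma lt_pow_of_le {q n i : ℕ} (hq : 2 ≤ q) (h : n + 1 ≤ i) : n < q ^ i := by
  calc n < 2 ^ n := Nat.lt_pow_self (by omega)
  _ ≤ 2 ^ i := Nat.pow_le_pow_right (by omega) (by omega)
  _ ≤ q ^ i := Nat.pow_le_pow_left hq i

lemma fact_ext {q : ℕ} (hq : 2 ≤ q) (n : ℕ) :
    ∀ B, n + 1 ≤ B →
      carlitzFactorial Fq q n = ∏ i ∈ Finset.range B, carlitzD Fq q i ^ (n / q ^ i % q) := by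
  intro B
  induction B with
  | zero => omega
  | succ B ih =>
    intro hB
    rcases Nat.lt_or_ge n B with h | h
    · rw [Finset.prod_range_succ, ih (by omega),
        Nat.div_eq_of_lt (lt_pow_of_le hq (by omega)), Nat.zero_mod, pow_zero, mul_one]
    · have hBe : B = n := by omega
      subst hBe
      rfl

lemma two_le_q {p s : ℕ} (hp : p.Prime) (hs : 0 < s) : 2 ≤ p ^ s :=
  calc 2 = 2 ^ 1 := rfl
  _ ≤ p ^ s := Nat.pow_le_pow_left hp.two_le 1 |>.trans (Nat.pow_le_pow_right hp.pos hs)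

lemma D_succ {p s : ℕ} [hpf : Fact p.Prime] [CharP Fq p] (i : ℕ) :
    carlitzD Fq (p ^ s) (i + 1) = brk Fq (p ^ s) (i + 1) * carlitzD Fq (p ^ s) i ^ p ^ s := by
  unfold carlitzD brk
  rw [Finset.prod_range_succ', pow_zero, pow_one, mul_comm]
  congr 1
  rw [← Finset.prod_pow]
  apply Finset.prod_congr rfl
  intro r _
  rw [sub_pow_char_pow, ← pow_mul X, ← pow_mul X, ← pow_succ (p ^ s) i, ← pow_succ (p ^ s) r]

lemma W_ext' {q : ℕ} (hq : 2 ≤ q) (m k B : ℕ) (hB : m + k ≤ q ^ B) :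
    ∀ C, B ≤ C →
      ∏ i ∈ Finset.range C, brk Fq q (i + 1) ^ cy q m k (i + 1)
        = ∏ i ∈ Finset.range B, brk Fq q (i + 1) ^ cy q m k (i + 1) := by
  intro C
  induction C with
  | zero => intro hC; rw [Nat.le_zero.mp hC]
  | succ C ih =>
    intro hBC
    rcases Nat.lt_or_ge B (C + 1) with hlt | hge
    · have hcz : cy q m k (C + 1) = 0 := by
        apply cy_eq_zero
        calc m + k ≤ q ^ B := hB
        _ < q ^ (C + 1) := Nat.pow_lt_pow_right (by omega) (by omega)
      rw [Finset.prod_range_succ, ih (by omega), hcz, pow_zero, mul_one]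
    · have hBe : B = C + 1 := by omega
      rw [hBe]

lemma W_eq_prod {q : ℕ} (hq : 2 ≤ q) (m k B : ℕ) (hB : m + k ≤ q ^ B) :
    W Fq q m k = ∏ i ∈ Finset.range B, brk Fq q (i + 1) ^ cy q m k (i + 1) := by
  have h1 : m + k ≤ q ^ (m + k) := le_of_lt (Nat.lt_pow_self (by omega))
  have e1 := W_ext' (Fq := Fq) hq m k (m + k) h1 (max B (m + k)) (le_max_right _ _)
  have e2 := W_ext' (Fq := Fq) hq m k B hB (max B (m + k)) (le_max_left _ _)
  unfold W
  rw [← e1, e2]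

lemma fact_id {p s : ℕ} [hpf : Fact p.Prime] [CharP Fq p] (hs : 0 < s) (m k : ℕ) :
    carlitzFactorial Fq (p ^ s) (m + k)
      = carlitzFactorial Fq (p ^ s) m * carlitzFactorial Fq (p ^ s) k * W Fq (p ^ s) m k := by
  have hq : 2 ≤ p ^ s := two_le_q hpf.out hs
  have e2 := fact_ext (Fq := Fq) hq m (m + k + 1) (by omega)
  have e3 := fact_ext (Fq := Fq) hq k (m + k + 1) (by omega)
  have key : carlitzFactorial Fq (p ^ s) (m + k)
        * ∏ i ∈ Finset.range (m + k + 1), carlitzD Fq (p ^ s) i ^ ((p ^ s) * cy (p ^ s) m k (i + 1))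
      = (carlitzFactorial Fq (p ^ s) m * carlitzFactorial Fq (p ^ s) k)
        * ∏ i ∈ Finset.range (m + k + 1), carlitzD Fq (p ^ s) i ^ cy (p ^ s) m k i := by
    rw [e2, e3]
    unfold carlitzFactorial
    rw [← Finset.prod_mul_distrib, ← Finset.prod_mul_distrib, ← Finset.prod_mul_distrib]
    apply Finset.prod_congr rfl
    intro i _
    rw [← pow_add, ← pow_add, ← pow_add, digit_id (p ^ s) m k i (by omega)]
  have split1 : ∏ i ∈ Finset.range (m + k + 1), carlitzD Fq (p ^ s) i ^ cy (p ^ s) m k i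
      = W Fq (p ^ s) m k
        * ∏ i ∈ Finset.range (m + k), carlitzD Fq (p ^ s) i ^ ((p ^ s) * cy (p ^ s) m k (i + 1)) := by
    rw [Finset.prod_range_succ', cy_zero, pow_zero, mul_one]
    unfold W
    rw [← Finset.prod_mul_distrib]
    apply Finset.prod_congr rfl
    intro i _
    rw [D_succ, mul_pow, ← pow_mul]
  have split2 : ∏ i ∈ Finset.range (m + k + 1),
        carlitzD Fq (p ^ s) i ^ ((p ^ s) * cy (p ^ s) m k (i + 1))
      = ∏ i ∈ Finset.range (m + k), carlitzD Fq (p ^ s) i ^ ((p ^ s) * cy (p ^ s) m k (i + 1)) := by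
    rw [Finset.prod_range_succ, cy_eq_zero (lt_pow_of_le hq (by omega)), mul_zero, pow_zero,
      mul_one]
  have hPr : (∏ i ∈ Finset.range (m + k),
      carlitzD Fq (p ^ s) i ^ ((p ^ s) * cy (p ^ s) m k (i + 1))) ≠ 0 :=
    Finset.prod_ne_zero_iff.mpr fun i _ => pow_ne_zero _ (D_ne_zero hq i)
  apply mul_right_cancel₀ hPr
  rw [mul_assoc, ← split1, ← key, split2]

lemma binom_eq_W {p s : ℕ} [hpf : Fact p.Prime] [CharP Fq p] (hs : 0 < s) {u n : ℕ}
    (hu : u ≤ n) : carlitzBinom Fq (p ^ s) n u = W Fq (p ^ s) u (n - u) := by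
  have hq : 2 ≤ p ^ s := two_le_q hpf.out hs
  unfold carlitzBinom
  rw [if_pos hu,
    show carlitzFactorial Fq (p ^ s) n = carlitzFactorial Fq (p ^ s) (u + (n - u)) by
      rw [Nat.add_sub_cancel' hu],
    fact_id hs u (n - u)]
  exact mul_div_cancel_left₀ _ (mul_ne_zero (fact_ne_zero hq u) (fact_ne_zero hq (n - u)))

/-! ### Behaviour modulo a prime -/

lemma W_split {q N : ℕ} (hq : 2 ≤ q) {K : Type*} [CommRing K] (φ : Polynomial Fq →+* K)
    (hper : ∀ i, φ (brk Fq q (i + N)) = φ (brk Fq q i))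
    (za zb u v : ℕ) (hza : za < q ^ N) (hu : u ≤ za) (hv : v ≤ zb) :
    φ (W Fq q (u + q ^ N * v) ((za - u) + q ^ N * (zb - v)))
      = φ (W Fq q u (za - u)) * φ (W Fq q v (zb - v)) := by
  have h1 : u + (za - u) = za := by omega
  have h2 : v + (zb - v) = zb := by omega
  have hmk : (u + q ^ N * v) + ((za - u) + q ^ N * (zb - v)) = za + q ^ N * zb := by
    calc (u + q ^ N * v) + ((za - u) + q ^ N * (zb - v))
        = (u + (za - u)) + q ^ N * (v + (zb - v)) := by ring
    _ = za + q ^ N * zb := by rw [h1, h2]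
  have hC : zb + 1 ≤ q ^ (zb + 1) := lt_pow_of_le hq (le_refl _)
  have hbound : (u + q ^ N * v) + ((za - u) + q ^ N * (zb - v)) ≤ q ^ (N + (zb + 1)) := by
    rw [hmk, pow_add]
    have h3 : za + q ^ N * zb + 1 ≤ q ^ N * (zb + 1) := by
      calc za + q ^ N * zb + 1 ≤ q ^ N * zb + q ^ N := by omega
      _ = q ^ N * (zb + 1) := by ring
    have h4 : q ^ N * (zb + 1) ≤ q ^ N * q ^ (zb + 1) :=
      Nat.mul_le_mul_left _ hC
    omega
  rw [W_eq_prod hq _ _ (N + (zb + 1)) hbound, map_prod, Finset.prod_range_add]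
  congr 1
  · rw [W_eq_prod hq u (za - u) N (by omega), map_prod]
    apply Finset.prod_congr rfl
    intro i hi
    rw [map_pow, map_pow,
      cy_shift_low u (za - u) v (zb - v) (by have := Finset.mem_range.mp hi; omega)]
  · rw [W_eq_prod hq v (zb - v) (zb + 1) (by omega), map_prod]
    apply Finset.prod_congr rfl
    intro i _
    have e1 : N + i + 1 = (i + 1) + N := by omega
    have e2 : N + i + 1 = N + (i + 1) := by omega
    rw [map_pow, map_pow, e1, hper (i + 1)]
    congr 1
    rw [← e1, e2, cy_shift_high (by omega) u (za - u) v (zb - v) (i + 1) (by omega) (by omega)]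

lemma resid_bound {q N : ℕ} (hq : 2 ≤ q) (hN : 0 < N) {K : Type*} [CommRing K]
    (φ : Polynomial Fq →+* K) (hbrkN : φ (brk Fq q N) = 0)
    (za zb w : ℕ) (hza : za < q ^ N) (hw : w ≤ za + q ^ N * zb)
    (hne : φ (W Fq q w ((za + q ^ N * zb) - w)) ≠ 0) :
    w % q ^ N ≤ za ∧ w / q ^ N ≤ zb := by
  have hP : 0 < q ^ N := Nat.pow_pos (by omega)
  have hsum : w + ((za + q ^ N * zb) - w) = za + q ^ N * zb := by omega
  have hcyN : cy q w ((za + q ^ N * zb) - w) N = 0 := by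
    rcases Nat.lt_or_ge (za + q ^ N * zb) (q ^ N) with hcase | hcase
    · apply cy_eq_zero; omega
    · by_contra hc
      apply hne
      have hmem : N - 1 ∈ Finset.range (w + ((za + q ^ N * zb) - w)) := by
        rw [Finset.mem_range, hsum]
        have : N < q ^ N := Nat.lt_pow_self (by omega)
        omega
      have hWφ : φ (W Fq q w ((za + q ^ N * zb) - w))
          = ∏ i ∈ Finset.range (w + ((za + q ^ N * zb) - w)),
              φ (brk Fq q (i + 1) ^ cy q w ((za + q ^ N * zb) - w) (i + 1)) := by
        unfold W; rw [map_prod]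
      rw [hWφ]
      apply Finset.prod_eq_zero hmem
      have eN : N - 1 + 1 = N := by omega
      rw [eN, map_pow, hbrkN, zero_pow hc]
  have h0 : w % q ^ N + ((za + q ^ N * zb) - w) % q ^ N < q ^ N := by
    by_contra hge
    have h1 : 1 ≤ (w % q ^ N + ((za + q ^ N * zb) - w) % q ^ N) / q ^ N :=
      (Nat.one_le_div_iff hP).mpr (by omega)
    unfold cy at hcyN
    omega
  have e1 := Nat.mod_add_div w (q ^ N)
  have e2 := Nat.mod_add_div ((za + q ^ N * zb) - w) (q ^ N)
  have key : q ^ N * (w / q ^ N + ((za + q ^ N * zb) - w) / q ^ N)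
      + (w % q ^ N + ((za + q ^ N * zb) - w) % q ^ N) = q ^ N * zb + za := by
    rw [Nat.mul_add]; omega
  have hmod : w % q ^ N + ((za + q ^ N * zb) - w) % q ^ N = za := by
    have h5 : (q ^ N * (w / q ^ N + ((za + q ^ N * zb) - w) / q ^ N)
        + (w % q ^ N + ((za + q ^ N * zb) - w) % q ^ N)) % q ^ N
        = (q ^ N * zb + za) % q ^ N := by rw [key]
    rwa [Nat.mul_add_mod, Nat.mul_add_mod, Nat.mod_eq_of_lt h0, Nat.mod_eq_of_lt hza] at h5
  have hdiv : w / q ^ N + ((za + q ^ N * zb) - w) / q ^ N = zb := by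
    have h6 : q ^ N * (w / q ^ N + ((za + q ^ N * zb) - w) / q ^ N) = q ^ N * zb := by omega
    exact Nat.eq_of_mul_eq_mul_left hP h6
  exact ⟨Nat.le.intro hmod, Nat.le.intro hdiv⟩

end CarlitzAux

/-- Lemma (main lemma): for a prime `℘` of degree `h ≥ 1` in `A`, a primitive root `𝔮`
modulo `℘`, `m ∈ ℤ`, and words `ᾱ, β̄ ∈ S_h^ω` (nonempty lists of digits `< q^h`, with
`z_ᾱ(h) = Nat.ofDigits (q^h) ᾱ`, `deg ᾱ = ᾱ.length`, concatenation = list append), the map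
`Ψ(u,v) = u + q^{h·deg ᾱ} v` is a bijection from `⋃_{j=0}^{q^h−2} S_j(ᾱ) × S_{m−j}(β̄)`
onto `S_m(ᾱ⋆β̄)`. -/
theorem carlitzResidueSet_bijOn (Fq : Type*) [Field Fq] [Fintype Fq]
    (p s : ℕ) (hp : p.Prime) (hs : 0 < s) (hcard : Fintype.card Fq = p ^ s)
    (h : ℕ) (hh : 1 ≤ h) (℘ : Polynomial Fq) (hirr : Irreducible ℘) (hdeg : ℘.natDegree = h)
    (𝔮 : (Polynomial Fq ⧸ Ideal.span {℘})ˣ) (hgen : ∀ x, x ∈ Subgroup.zpowers 𝔮)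
    (m : ℤ) (a b : List ℕ) (ha : a ≠ []) (ha' : ∀ x ∈ a, x < (p ^ s) ^ h)
    (hb : b ≠ []) (hb' : ∀ x ∈ b, x < (p ^ s) ^ h) :
    Set.BijOn (fun uv : ℕ × ℕ => uv.1 + ((p ^ s) ^ h) ^ a.length * uv.2)
      (⋃ j ∈ Finset.range ((p ^ s) ^ h - 1),
        carlitzResidueSet Fq (p ^ s) ℘ 𝔮 (Nat.ofDigits ((p ^ s) ^ h) a) (j : ℤ) ×ˢ
          carlitzResidueSet Fq (p ^ s) ℘ 𝔮 (Nat.ofDigits ((p ^ s) ^ h) b) (m - (j : ℤ)))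
      (carlitzResidueSet Fq (p ^ s) ℘ 𝔮 (Nat.ofDigits ((p ^ s) ^ h) (a ++ b)) m) := by
  classical
  haveI hpf : Fact p.Prime := ⟨hp⟩
  have hq2 : 2 ≤ p ^ s := CarlitzAux.two_le_q hp hs
  have hQ2 : 2 ≤ (p ^ s) ^ h :=
    le_trans hq2 (Nat.le_self_pow (by omega) _)
  -- characteristic of Fq is p
  haveI hchar : CharP Fq p := by
    have h0 : ((Fintype.card Fq : ℕ) : Fq) = 0 := FiniteField.cast_card_eq_zero Fq
    rw [hcard] at h0
    push_cast at h0
    have h2 : (p : Fq) = 0 := (pow_eq_zero_iff (by omega : s ≠ 0)).mp h0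
    have h3 : ringChar Fq ∣ p := ringChar.dvd (by exact_mod_cast h2)
    have h4 : ringChar Fq = p :=
      ((hp.eq_one_or_self_of_dvd _ h3).resolve_left (CharP.ringChar_ne_one))
    exact ringChar.of_eq h4
  -- the quotient is a finite field with (p^s)^h elements
  haveI hmax : (Ideal.span {℘}).IsMaximal := PrincipalIdealRing.isMaximal_of_irreducible hirr
  letI : Field (Polynomial Fq ⧸ Ideal.span {℘}) := Ideal.Quotient.field _
  let pb : PowerBasis Fq (AdjoinRoot ℘) := AdjoinRoot.powerBasis hirr.ne_zero
  haveI : Module.Finite Fq (AdjoinRoot ℘) := pb.finite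
  haveI : Finite (AdjoinRoot ℘) := Module.finite_of_finite Fq
  letI ftK : Fintype (AdjoinRoot ℘) := Fintype.ofFinite _
  letI ftK' : Fintype (Polynomial Fq ⧸ Ideal.span {℘}) := ftK
  have hcardK : @Fintype.card (Polynomial Fq ⧸ Ideal.span {℘}) ftK' = (p ^ s) ^ h := by
    have h1 : Module.finrank Fq (AdjoinRoot ℘) = h := by
      rw [pb.finrank]
      rw [show pb.dim = ℘.natDegree from AdjoinRoot.powerBasis_dim hirr.ne_zero, hdeg]
    calc @Fintype.card (Polynomial Fq ⧸ Ideal.span {℘}) ftK'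
        = Fintype.card Fq ^ Module.finrank Fq (AdjoinRoot ℘) :=
          Module.card_eq_pow_finrank (K := Fq) (V := AdjoinRoot ℘)
    _ = (p ^ s) ^ h := by rw [h1, hcard]
  set π := Ideal.Quotient.mk (Ideal.span {℘}) with hπ
  have hXcard : (π X) ^ ((p ^ s) ^ h) = π X := by
    conv_lhs => rw [← hcardK]
    exact @FiniteField.pow_card _ _ ftK' (π X)
  -- periodicity of brackets modulo ℘
  have hper1 : ∀ i, π (CarlitzAux.brk Fq (p ^ s) (i + h)) = π (CarlitzAux.brk Fq (p ^ s) i) := by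
    intro i
    unfold CarlitzAux.brk
    rw [map_sub, map_sub, map_pow, map_pow]
    congr 1
    rw [show (p ^ s) ^ (i + h) = (p ^ s) ^ h * (p ^ s) ^ i by
      rw [← pow_add, Nat.add_comm]]
    rw [pow_mul, hXcard]
  have hperN : ∀ (L0 : ℕ) i,
      π (CarlitzAux.brk Fq (p ^ s) (i + h * L0)) = π (CarlitzAux.brk Fq (p ^ s) i) := by
    intro L0
    induction L0 with
    | zero => intro i; rw [Nat.mul_zero, Nat.add_zero]
    | succ L0 ih =>
      intro i
      have e : i + h * (L0 + 1) = (i + h * L0) + h := by ring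
      rw [e, hper1 (i + h * L0), ih i]
  have hbrk0 : π (CarlitzAux.brk Fq (p ^ s) 0) = 0 := by
    unfold CarlitzAux.brk
    rw [pow_zero, pow_one, sub_self, map_zero]
  -- order of 𝔮
  have horder : 𝔮 ^ ((p ^ s) ^ h - 1) = 1 := by
    apply Units.ext
    rw [Units.val_pow_eq_pow_val, Units.val_one, ← hcardK]
    exact @FiniteField.pow_card_sub_one_eq_one _ _ ftK' _ (Units.ne_zero 𝔮)
  -- notation
  set L := a.length with hL
  set za := Nat.ofDigits ((p ^ s) ^ h) a with hzadef
  set zb := Nat.ofDigits ((p ^ s) ^ h) b with hzbdef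
  have hN : 0 < h * L := by
    have : 0 < L := by
      rw [hL]
      exact List.length_pos_iff.mpr ha
    positivity
  have hQL : ((p ^ s) ^ h) ^ L = (p ^ s) ^ (h * L) := by rw [← pow_mul]
  have hza : za < (p ^ s) ^ (h * L) := by
    rw [← hQL]
    exact Nat.ofDigits_lt_base_pow_length (by omega) ha'
  have hn : Nat.ofDigits ((p ^ s) ^ h) (a ++ b) = za + (p ^ s) ^ (h * L) * zb := by
    rw [Nat.ofDigits_append, hQL]
  have hbrkN : π (CarlitzAux.brk Fq (p ^ s) (h * L)) = 0 := by
    have h7 := hperN L 0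
    rw [Nat.zero_add] at h7
    rw [h7, hbrk0]
  -- the key multiplicativity (A)
  have hA : ∀ u v : ℕ, u ≤ za → v ≤ zb →
      π (carlitzBinom Fq (p ^ s) (za + (p ^ s) ^ (h * L) * zb) (u + (p ^ s) ^ (h * L) * v))
        = π (carlitzBinom Fq (p ^ s) za u) * π (carlitzBinom Fq (p ^ s) zb v) := by
    intro u v hu hv
    have h8 : u + (p ^ s) ^ (h * L) * v ≤ za + (p ^ s) ^ (h * L) * zb := by
      have := Nat.mul_le_mul_left ((p ^ s) ^ (h * L)) hv
      omega
    rw [CarlitzAux.binom_eq_W hs h8, CarlitzAux.binom_eq_W hs hu, CarlitzAux.binom_eq_W hs hv]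
    have e : (za + (p ^ s) ^ (h * L) * zb) - (u + (p ^ s) ^ (h * L) * v)
        = (za - u) + (p ^ s) ^ (h * L) * (zb - v) := by
      have h9 : (p ^ s) ^ (h * L) * (zb - v) + (p ^ s) ^ (h * L) * v
          = (p ^ s) ^ (h * L) * zb := by
        rw [← Nat.mul_add]
        congr 1
        omega
      omega
    rw [e]
    exact CarlitzAux.W_split hq2 π (fun i => hperN L i) za zb u v hza hu hv
  constructor
  · -- MapsTo
    rintro ⟨u, v⟩ huv
    obtain ⟨j, hj, hmem⟩ := Set.mem_iUnion₂.mp huv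
    obtain ⟨⟨hu1, hu2⟩, hv1, hv2⟩ := hmem
    have hu1' : u ≤ za := hu1
    have hv1' : v ≤ zb := hv1
    have hu2' : π (carlitzBinom Fq (p ^ s) za u) = ↑(𝔮 ^ (j : ℤ)) := hu2
    have hv2' : π (carlitzBinom Fq (p ^ s) zb v) = ↑(𝔮 ^ (m - (j : ℤ))) := hv2
    show u + ((p ^ s) ^ h) ^ L * v ∈
      carlitzResidueSet Fq (p ^ s) ℘ 𝔮 (Nat.ofDigits ((p ^ s) ^ h) (a ++ b)) m
    simp only [carlitzResidueSet, Set.mem_setOf_eq]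
    rw [hn, hQL]
    constructor
    · have := Nat.mul_le_mul_left ((p ^ s) ^ (h * L)) hv1'
      omega
    · rw [hA u v hu1' hv1', hu2', hv2', ← Units.val_mul, ← zpow_add]
      congr 2
      ring
  constructor
  · -- InjOn
    rintro ⟨u, v⟩ h1 ⟨u', v'⟩ h2 heq
    obtain ⟨j, hj, hmem⟩ := Set.mem_iUnion₂.mp h1
    obtain ⟨j', hj', hmem'⟩ := Set.mem_iUnion₂.mp h2
    have hu : u < ((p ^ s) ^ h) ^ L := lt_of_le_of_lt hmem.1.1 (by rw [hQL]; exact hza)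
    have hu' : u' < ((p ^ s) ^ h) ^ L := lt_of_le_of_lt hmem'.1.1 (by rw [hQL]; exact hza)
    have hP0 : 0 < ((p ^ s) ^ h) ^ L := by positivity
    have heq' : u + ((p ^ s) ^ h) ^ L * v = u' + ((p ^ s) ^ h) ^ L * v' := heq
    have m1 : (u + ((p ^ s) ^ h) ^ L * v) % ((p ^ s) ^ h) ^ L = u := by
      rw [Nat.add_mul_mod_self_left, Nat.mod_eq_of_lt hu]
    have m2 : (u' + ((p ^ s) ^ h) ^ L * v') % ((p ^ s) ^ h) ^ L = u' := by
      rw [Nat.add_mul_mod_self_left, Nat.mod_eq_of_lt hu']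
    have d1 : (u + ((p ^ s) ^ h) ^ L * v) / ((p ^ s) ^ h) ^ L = v := by
      rw [Nat.add_mul_div_left _ _ hP0, Nat.div_eq_of_lt hu, Nat.zero_add]
    have d2 : (u' + ((p ^ s) ^ h) ^ L * v') / ((p ^ s) ^ h) ^ L = v' := by
      rw [Nat.add_mul_div_left _ _ hP0, Nat.div_eq_of_lt hu', Nat.zero_add]
    have e1 : u = u' := by rw [← m1, ← m2, heq']
    have e2 : v = v' := by rw [← d1, ← d2, heq']
    exact Prod.ext e1 e2
  · -- SurjOn
    intro w hw
    obtain ⟨hwle, hwcong⟩ := hw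
    rw [hn] at hwle hwcong
    have hwne : π (carlitzBinom Fq (p ^ s) (za + (p ^ s) ^ (h * L) * zb) w) ≠ 0 := by
      rw [hwcong]
      exact Units.ne_zero _
    have hres := CarlitzAux.resid_bound hq2 hN π hbrkN za zb w hza hwle
      (by rw [← CarlitzAux.binom_eq_W hs hwle]; exact hwne)
    obtain ⟨hu, hv⟩ := hres
    have hw' : w = w % (p ^ s) ^ (h * L) + (p ^ s) ^ (h * L) * (w / (p ^ s) ^ (h * L)) :=
      (Nat.mod_add_div w ((p ^ s) ^ (h * L))).symm
    have hmul : π (carlitzBinom Fq (p ^ s) za (w % (p ^ s) ^ (h * L)))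
        * π (carlitzBinom Fq (p ^ s) zb (w / (p ^ s) ^ (h * L))) = ↑(𝔮 ^ m) := by
      rw [← hA _ _ hu hv, ← hw']
      exact hwcong
    have hx : π (carlitzBinom Fq (p ^ s) za (w % (p ^ s) ^ (h * L))) ≠ 0 := by
      intro h0
      rw [h0, zero_mul] at hmul
      exact Units.ne_zero _ hmul.symm
    obtain ⟨xu, hxu⟩ := isUnit_iff_ne_zero.mpr hx
    obtain ⟨t, ht⟩ := Subgroup.mem_zpowers_iff.mp (hgen xu)
    have hM1 : (1 : ℤ) ≤ (((p ^ s) ^ h - 1 : ℕ) : ℤ) := by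
      have : 1 ≤ (p ^ s) ^ h - 1 := by omega
      exact_mod_cast this
    have hgeq : 𝔮 ^ ((((p ^ s) ^ h - 1 : ℕ) : ℤ)) = 1 := by
      rw [zpow_natCast, horder]
    have hj0 : 0 ≤ t % (((p ^ s) ^ h - 1 : ℕ) : ℤ) := Int.emod_nonneg t (by omega)
    have hjlt : t % (((p ^ s) ^ h - 1 : ℕ) : ℤ) < (((p ^ s) ^ h - 1 : ℕ) : ℤ) :=
      Int.emod_lt_of_pos t (by omega)
    have hqj : 𝔮 ^ (t % (((p ^ s) ^ h - 1 : ℕ) : ℤ)) = 𝔮 ^ t := by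
      conv_rhs => rw [show t = (((p ^ s) ^ h - 1 : ℕ) : ℤ) * (t / (((p ^ s) ^ h - 1 : ℕ) : ℤ))
        + t % (((p ^ s) ^ h - 1 : ℕ) : ℤ) from (Int.mul_ediv_add_emod t _).symm]
      rw [zpow_add, zpow_mul, hgeq, one_zpow, one_mul]
    set j : ℤ := t % (((p ^ s) ^ h - 1 : ℕ) : ℤ) with hjdef
    have hcast : ((j.toNat : ℕ) : ℤ) = j := Int.toNat_of_nonneg hj0
    have hx1 : π (carlitzBinom Fq (p ^ s) za (w % (p ^ s) ^ (h * L)))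
        = ↑(𝔮 ^ ((j.toNat : ℕ) : ℤ)) := by
      rw [hcast, hjdef, hqj, ht, hxu]
    have hx2 : π (carlitzBinom Fq (p ^ s) zb (w / (p ^ s) ^ (h * L)))
        = ↑(𝔮 ^ (m - ((j.toNat : ℕ) : ℤ))) := by
      have hq12 : 𝔮 ^ ((j.toNat : ℕ) : ℤ) * 𝔮 ^ (m - ((j.toNat : ℕ) : ℤ)) = 𝔮 ^ m := by
        rw [← zpow_add]
        congr 1
        ring
      apply (Units.isUnit (𝔮 ^ ((j.toNat : ℕ) : ℤ))).mul_left_cancel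
      rw [← Units.val_mul, hq12, ← hmul, hx1]
    refine ⟨(w % (p ^ s) ^ (h * L), w / (p ^ s) ^ (h * L)), ?_, ?_⟩
    · apply Set.mem_iUnion₂.mpr
      refine ⟨j.toNat, Finset.mem_range.mpr (by omega), ⟨⟨hu, hx1⟩, ⟨hv, hx2⟩⟩⟩
    · show w % (p ^ s) ^ (h * L) + ((p ^ s) ^ h) ^ L * (w / (p ^ s) ^ (h * L)) = w
      rw [hQL]
      omega
end
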